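/- Fix a constant q > 0 and let B_CC = {M | CC(M) ≤ q}. Then B_CC is a (⌊2^q⌋+1)-safety property, but it is not a k-safety property for any k ≤ ⌊2^q⌋. -/

import Mathlib

/-!
Statement 15: Fix `q > 0` and let `B_CC = {M | CC(M) ≤ q}`.  Then `B_CC` is a
`(⌊2^q⌋+1)`-safety property, but it is not a `k`-safety property for any
`k ≤ ⌊2^q⌋`.  Programs are deterministic with finite nonempty high- and
low-security input sets drawn from a fixed countable universe (here `ℕ`).
For deterministic programs `CC(M) = max_{ℓ∈𝕃} log₂ |{o | ∃h ∈ ℍ. o = M(h,ℓ)}|`.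
-/

/-- A deterministic program with finite nonempty high-security input set `Hs`,
finite nonempty low-security input set `Ls`, and behavior `f` (inputs and
outputs drawn from the fixed countable universe `ℕ`). -/
structure Prog where
  Hs : Finset ℕ
  Ls : Finset ℕ
  hH : Hs.Nonempty
  hL : Ls.Nonempty
  f : ℕ → ℕ → ℕ

/-- The set of traces `⟦M⟧ = {((h,ℓ),o) | h ∈ ℍ, ℓ ∈ 𝕃, o = M(h,ℓ)}`. -/
def Prog.traces (M : Prog) : Set ((ℕ × ℕ) × ℕ) :=
  {t | t.1.1 ∈ M.Hs ∧ t.1.2 ∈ M.Ls ∧ t.2 = M.f t.1.1 t.1.2}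

/-- The channel-capacity-based QIF of a deterministic program:
`CC(M) = max_{ℓ∈𝕃} log₂ |{o | ∃h ∈ ℍ. o = M(h,ℓ)}|`. -/
noncomputable def Prog.CC (M : Prog) : ℝ :=
  M.Ls.sup' M.hL fun ℓ => Real.logb 2 ((M.Hs.image fun h => M.f h ℓ).card)

/-- A set `P` of programs is a `k`-safety property iff whenever `M ∉ P`, there
is a set `T ⊆ ⟦M⟧` of at most `k` traces such that every program `M'` with
`T ⊆ ⟦M'⟧` satisfies `M' ∉ P`. -/
def IsKSafety (k : ℕ) (P : Prog → Prop) : Prop :=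
  ∀ M : Prog, ¬ P M →
    ∃ T ⊆ M.traces, T.ncard ≤ k ∧ ∀ M' : Prog, T ⊆ M'.traces → ¬ P M'

lemma CC_le_iff (M : Prog) (q : ℝ) :
    M.CC ≤ q ↔ ∀ ℓ ∈ M.Ls, ((M.Hs.image fun h => M.f h ℓ).card : ℝ) ≤ (2 : ℝ) ^ q := by
  unfold Prog.CC
  rw [Finset.sup'_le_iff]
  refine forall₂_congr fun ℓ hℓ => ?_
  have hc : (0 : ℝ) < ((M.Hs.image fun h => M.f h ℓ).card : ℝ) := by
    exact_mod_cast Finset.card_pos.mpr (M.hH.image _)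
  rw [Real.logb_le_iff_le_rpow one_lt_two hc]


/-- For a constant bound `q > 0`, the bounding problem `B_CC = {M | CC(M) ≤ q}`
is `(⌊2^q⌋+1)`-safety, but not `k`-safety for any `k ≤ ⌊2^q⌋`. -/
theorem B_CC_ksafety (q : ℝ) (hq : 0 < q) :
    IsKSafety (⌊(2 : ℝ) ^ q⌋₊ + 1) (fun M => M.CC ≤ q) ∧
      ∀ k : ℕ, k ≤ ⌊(2 : ℝ) ^ q⌋₊ → ¬ IsKSafety k (fun M => M.CC ≤ q) := by
  classical
  set n := ⌊(2 : ℝ) ^ q⌋₊ with hn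
  have h2q : (2 : ℝ) ^ q < n + 1 := by exact_mod_cast Nat.lt_floor_add_one ((2 : ℝ) ^ q)
  have hn2q : (n : ℝ) ≤ (2 : ℝ) ^ q := Nat.floor_le (by positivity)
  have h1r : (1 : ℝ) ≤ (2 : ℝ) ^ q := by
    calc (1 : ℝ) = (2 : ℝ) ^ (0 : ℝ) := by rw [Real.rpow_zero]
    _ ≤ (2 : ℝ) ^ q := Real.rpow_le_rpow_left_iff one_lt_two |>.2 hq.le
  have hn1 : 1 ≤ n := Nat.le_floor (by exact_mod_cast h1r)
  constructor
  · -- (n+1)-safety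
    intro M hM
    replace hM : ¬ M.CC ≤ q := hM
    rw [CC_le_iff] at hM
    push_neg at hM
    obtain ⟨ℓ, hℓ, hcard⟩ := hM
    have hcard' : n + 1 ≤ (M.Hs.image fun h => M.f h ℓ).card := by
      have : (n : ℝ) < ((M.Hs.image fun h => M.f h ℓ).card : ℝ) := lt_of_le_of_lt hn2q hcard
      exact_mod_cast this
    obtain ⟨O, hO, hOcard⟩ := Finset.exists_subset_card_eq hcard'
    -- choose witnesses
    have hwit : ∀ o ∈ O, ∃ h ∈ M.Hs, M.f h ℓ = o := by
      intro o ho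
      have := hO ho
      simpa using Finset.mem_image.1 this
    set g : ℕ → ℕ := fun o => if hx : ∃ h ∈ M.Hs, M.f h ℓ = o then hx.choose else 0 with hg
    have hg1 : ∀ o ∈ O, g o ∈ M.Hs ∧ M.f (g o) ℓ = o := by
      intro o ho
      have hx := hwit o ho
      simp only [hg, dif_pos hx]
      exact ⟨hx.choose_spec.1, hx.choose_spec.2⟩
    refine ⟨↑(O.image fun o => ((g o, ℓ), o)), ?_, ?_, ?_⟩
    · intro t ht
      obtain ⟨o, ho, rfl⟩ := Finset.mem_image.1 ht
      exact ⟨(hg1 o ho).1, hℓ, ((hg1 o ho).2).symm⟩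
    · rw [Set.ncard_coe_finset]
      exact le_trans (Finset.card_image_le) hOcard.le
    · intro M' hT
      show ¬ M'.CC ≤ q
      rw [CC_le_iff]
      push_neg
      have hℓ' : ℓ ∈ M'.Ls := by
        obtain ⟨o, ho⟩ := Finset.card_pos.1 (by omega : 0 < O.card)
        exact (hT (Finset.mem_coe.2 (Finset.mem_image_of_mem _ ho))).2.1
      refine ⟨ℓ, hℓ', ?_⟩
      have hsub : O ⊆ M'.Hs.image fun h => M'.f h ℓ := by
        intro o ho
        have ht := hT (Finset.mem_coe.2 (Finset.mem_image_of_mem _ ho))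
        exact Finset.mem_image.2 ⟨g o, ht.1, ht.2.2.symm⟩
      have : n + 1 ≤ (M'.Hs.image fun h => M'.f h ℓ).card := hOcard ▸ Finset.card_le_card hsub
      calc (2 : ℝ) ^ q < n + 1 := h2q
      _ ≤ _ := by exact_mod_cast this
  · -- not k-safety for k ≤ n
    intro k hk hsafe
    set M : Prog := ⟨Finset.range (n + 1), {0}, ⟨0, by simp⟩, ⟨0, by simp⟩, fun h _ => h⟩ with hM
    have hMtr : M.traces = (fun h => ((h, 0), h)) '' ↑(Finset.range (n + 1)) := by
      ext ⟨⟨h, ℓ⟩, o⟩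
      simp only [Prog.traces, hM, Set.mem_setOf_eq, Finset.mem_singleton, Set.mem_image,
        Finset.coe_range, Set.mem_Iio, Finset.mem_range, Prod.mk.injEq]
      aesop
    have hMCC : ¬ M.CC ≤ q := by
      rw [CC_le_iff]
      push_neg
      refine ⟨0, by simp [hM], ?_⟩
      have : (Finset.range (n + 1)).image (fun h => h) = Finset.range (n + 1) := Finset.image_id
      simp only [hM]
      rw [this, Finset.card_range]
      exact_mod_cast h2q
    obtain ⟨T, hT, hTcard, hkill⟩ := hsafe M hMCC
    -- the set of h's appearing in T
    set S : Finset ℕ := (Finset.range (n + 1)).filter (fun h => ((h, 0), h) ∈ T) with hS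
    have hTS : T = (fun h => ((h, 0), h)) '' ↑S := by
      ext t
      constructor
      · intro ht
        obtain ⟨h, hh, rfl⟩ := hMtr ▸ hT ht
        refine ⟨h, ?_, rfl⟩
        rw [Finset.mem_coe, hS, Finset.mem_filter]
        exact ⟨Finset.mem_range.2 (by simpa using hh), ht⟩
      · rintro ⟨h, hh, rfl⟩
        have hm := Finset.mem_coe.1 hh
        rw [hS, Finset.mem_filter] at hm
        exact hm.2
    have hinj : Function.Injective (fun h : ℕ => ((h, 0), h)) := by
      intro a b hab; simpa using congrArg (fun t => t.2) hab
    have hScard : S.card ≤ k := by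
      have : T.ncard = S.card := by
        rw [hTS, Set.ncard_image_of_injective _ hinj, Set.ncard_coe_finset]
      omega
    -- pick h₀ in range (n+1) not in S
    have : ∃ h₀ ∈ Finset.range (n + 1), h₀ ∉ S := by
      by_contra hc
      push_neg at hc
      have := Finset.card_le_card (fun x hx => hc x hx)
      rw [Finset.card_range] at this
      omega
    obtain ⟨h₀, hh₀, hh₀S⟩ := this
    set h₁ : ℕ := if h₀ = 0 then 1 else 0 with hh1
    have hne : h₁ ≠ h₀ := by
      rcases eq_or_ne h₀ 0 with rfl | h; · simp [hh1]
      · simp [hh1, h, Ne.symm h]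
    set M' : Prog := ⟨Finset.range (n + 1), {0}, ⟨0, by simp⟩, ⟨0, by simp⟩,
      fun h _ => if h = h₀ then h₁ else h⟩ with hM'
    have hT' : T ⊆ M'.traces := by
      intro t ht
      obtain ⟨h, hh, rfl⟩ := hTS ▸ ht
      have hhS : h ∈ S := by simpa using hh
      have hhr : h ∈ Finset.range (n + 1) := (Finset.mem_filter.1 hhS).1
      have hhne : h ≠ h₀ := fun he => hh₀S (he ▸ hhS)
      exact ⟨by simpa [hM'] using hhr, by simp [hM'], by simp [hM', hhne]⟩
    refine hkill M' hT' ?_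
    show M'.CC ≤ q
    rw [CC_le_iff]
    intro ℓ hℓ
    have hsub : (M'.Hs.image fun h => M'.f h ℓ) ⊆ (Finset.range (n + 1)).erase h₀ := by
      intro o ho
      obtain ⟨h, hh, rfl⟩ := Finset.mem_image.1 ho
      simp only [hM'] at hh ⊢
      rcases eq_or_ne h h₀ with rfl | hne'
      · rw [if_pos rfl]
        refine Finset.mem_erase.2 ⟨hne, ?_⟩
        simp only [hh1]
        split <;> simp [Finset.mem_range]; omega
      · rw [if_neg hne']
        exact Finset.mem_erase.2 ⟨hne', hh⟩
    have hcard : (M'.Hs.image fun h => M'.f h ℓ).card ≤ n := by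
      have := Finset.card_le_card hsub
      rw [Finset.card_erase_of_mem hh₀, Finset.card_range] at this
      omega
    calc ((M'.Hs.image fun h => M'.f h ℓ).card : ℝ) ≤ (n : ℝ) := by exact_mod_cast hcard
    _ ≤ (2 : ℝ) ^ q := hn2q
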